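/- Let ε₀ > 0 and suppose the uniform large deviation estimate holds with parameters (ε₀, η₀, N₀). Let 0 < δ₀ < η₀. Then for ℙ-almost every ω there exists N₁ = N₁(ω) such that for every n > N₁: max{ Leb(B⁻_{[n+1,3n+1],ε₀,ω} ∩ σ), Leb(B⁻_{[−n,n],ε₀,ω} ∩ σ) } ≤ e^{−(η₀−δ₀)(2n+1)}, where Leb denotes Lebesgue measure on ℝ. -/
import Mathlib


open MeasureTheory Filter Real Set Topology Pointwise

noncomputable section

namespace Anderson

/-- One-step transfer matrix `A(v) = [[E - v, -1], [1, 0]]`. -/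
def Amat (E v : ℝ) : Matrix (Fin 2) (Fin 2) ℝ := !![E - v, -1; 1, 0]

/-- Transfer matrix `T_{[a,b],E,ω} = A(ω_b) ⋯ A(ω_a)` (for `a ≤ b`). -/
def Tmat (E : ℝ) (ω : ℤ → ℝ) (a b : ℤ) : Matrix (Fin 2) (Fin 2) ℝ :=
  ((List.range ((b - a).toNat + 1)).map (fun i => Amat E (ω (b - (i : ℤ))))).prod

/-- (Frobenius) norm of a 2×2 matrix. -/
def matNorm (M : Matrix (Fin 2) (Fin 2) ℝ) : ℝ := Real.sqrt (∑ i, ∑ j, (M i j) ^ 2)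

/-- The restriction `H_{[a,b],ω}` of the Anderson Hamiltonian to the box `[a,b]`,
a `(b-a+1) × (b-a+1)` tridiagonal matrix. -/
def HBox (ω : ℤ → ℝ) (a b : ℤ) :
    Matrix (Fin ((b - a).toNat + 1)) (Fin ((b - a).toNat + 1)) ℝ :=
  Matrix.of fun i j =>
    if (i : ℕ) = (j : ℕ) then ω (a + (i : ℕ))
    else if (i : ℕ) = (j : ℕ) + 1 ∨ (j : ℕ) = (i : ℕ) + 1 then 1 else 0

/-- `H_{[a,b],ω} - E`, as a matrix. -/
def HBoxE (E : ℝ) (ω : ℤ → ℝ) (a b : ℤ) :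
    Matrix (Fin ((b - a).toNat + 1)) (Fin ((b - a).toNat + 1)) ℝ :=
  HBox ω a b - E • (1 : Matrix (Fin ((b - a).toNat + 1)) (Fin ((b - a).toNat + 1)) ℝ)

/-- `P_{[a,b],E,ω} = det (H_{[a,b],ω} - E)`; equal to `1` when `a > b`. -/
def Pdet (E : ℝ) (ω : ℤ → ℝ) (a b : ℤ) : ℝ :=
  if a ≤ b then (HBoxE E ω a b).det else 1

/-- `E` is an eigenvalue of `H_{[a,b],ω}`. -/
def IsEVBox (E : ℝ) (ω : ℤ → ℝ) (a b : ℤ) : Prop := (HBoxE E ω a b).det = 0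

/-- Index of a site `x ∈ [a,b] ∩ ℤ` inside the box `[a,b]`. -/
def idx (a b x : ℤ) : Fin ((b - a).toNat + 1) :=
  ⟨(x - a).toNat % ((b - a).toNat + 1), Nat.mod_lt _ (Nat.succ_pos _)⟩

/-- Green's function `G_{[a,b],E,ω}(x,y) = (H_{[a,b],ω} - E)⁻¹(x,y)`. -/
def Green (E : ℝ) (ω : ℤ → ℝ) (a b x y : ℤ) : ℝ :=
  (HBoxE E ω a b)⁻¹ (idx a b x) (idx a b y)

/-- The site `x` is `(c, n, E, ω)`-regular. -/
def IsRegularSite (c : ℝ) (n : ℕ) (E : ℝ) (ω : ℤ → ℝ) (x : ℤ) : Prop :=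
  ¬ IsEVBox E ω (x - n) (x + n) ∧
    |Green E ω (x - n) (x + n) x (x - n)| ≤ Real.exp (-c * n) ∧
    |Green E ω (x - n) (x + n) x (x + n)| ≤ Real.exp (-c * n)

/-- `Ψ` is a nonzero, polynomially bounded generalized eigenfunction of `H_ω`
for the energy `E`. -/
def IsGenEF (ω : ℤ → ℝ) (E : ℝ) (Ψ : ℤ → ℝ) : Prop :=
  Ψ ≠ 0 ∧ (∃ C : ℝ, ∃ k : ℕ, ∀ n : ℤ, |Ψ n| ≤ C * (1 + |(n : ℝ)|) ^ k) ∧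
    ∀ n : ℤ, Ψ (n + 1) + Ψ (n - 1) + ω n * Ψ n = E * Ψ n

/-- `E` is a generalized eigenvalue of `H_ω`. -/
def IsGenEV (ω : ℤ → ℝ) (E : ℝ) : Prop := ∃ Ψ, IsGenEF ω E Ψ

end Anderson

noncomputable section

namespace AndersonAux2
open Anderson

lemma measurable_Pdet (a b : ℤ) :
    Measurable fun p : ℝ × (ℤ → ℝ) => Anderson.Pdet p.1 p.2 a b := by
  classical
  unfold Anderson.Pdet
  by_cases hab : a ≤ b
  · simp only [if_pos hab]
    have hentry : ∀ i j, Measurable fun p : ℝ × (ℤ → ℝ) => Anderson.HBoxE p.1 p.2 a b i j := by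
      intro i j
      unfold Anderson.HBoxE Anderson.HBox
      simp only [Matrix.sub_apply, Matrix.smul_apply, Matrix.one_apply, Matrix.of_apply,
        smul_eq_mul]
      apply Measurable.sub
      · split_ifs
        · exact (measurable_pi_apply _).comp measurable_snd
        · exact measurable_const
        · exact measurable_const
      · split_ifs
        · simpa using measurable_fst
        · simpa using (measurable_const : Measurable fun _ : ℝ × (ℤ → ℝ) => (0 : ℝ))
    simp_rw [Matrix.det_apply']
    apply Finset.measurable_sum
    intro σ _
    exact ((Finset.measurable_prod _ (fun i _ => hentry (σ i) i)).const_mul _)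
  · simp only [if_neg hab]; exact measurable_const

lemma finite_root_set (ω : ℤ → ℝ) (a b : ℤ) :
    {E : ℝ | Anderson.Pdet E ω a b = 0}.Finite := by
  classical
  by_cases hab : a ≤ b
  · set H := Anderson.HBox ω a b with hH
    have key : ∀ E : ℝ, Anderson.Pdet E ω a b =
        (-1 : ℝ) ^ ((b - a).toNat + 1) * (Matrix.charpoly H).eval E := by
      intro E
      have h1 : Anderson.HBoxE E ω a b = -((Matrix.charmatrix H).map (Polynomial.eval E)) := by
        ext i j
        by_cases hij : i = j
        · subst hij
          simp [Anderson.HBoxE, Matrix.charmatrix_apply_eq, Matrix.map_apply,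
            Matrix.sub_apply, Matrix.smul_apply, Matrix.one_apply, hH]
        · simp [Anderson.HBoxE, Matrix.charmatrix_apply_ne _ _ _ hij, Matrix.map_apply,
            Matrix.sub_apply, Matrix.smul_apply, Matrix.one_apply, hij, hH]
      have h2 : ((Matrix.charmatrix H).map (Polynomial.eval E)).det
          = (Matrix.charpoly H).eval E := by
        have := (Polynomial.evalRingHom E).map_det (Matrix.charmatrix H)
        simpa [Matrix.charpoly, Polynomial.coe_evalRingHom] using this.symm
      rw [Anderson.Pdet, if_pos hab, h1, Matrix.det_neg, h2, Fintype.card_fin]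
    have hne : Matrix.charpoly H ≠ 0 := (Matrix.charpoly_monic H).ne_zero
    refine (Polynomial.finite_setOf_isRoot hne).subset ?_
    intro E hE
    simp only [Set.mem_setOf_eq, key E, mul_eq_zero] at hE
    rcases hE with h | h
    · exact absurd h (by positivity)
    · exact h
  · refine Set.finite_empty.subset ?_
    intro E hE
    simp [Anderson.Pdet, hab] at hE

lemma measurable_gamma {γ : ℝ → ℝ} (ℙ : Measure (ℤ → ℝ)) [IsProbabilityMeasure ℙ]
    (hγ : ∀ E : ℝ, Tendsto
      (fun n : ℕ => (∫ ω, Real.log (matNorm (Tmat E ω 0 n)) ∂ℙ) / (n + 1)) atTop (𝓝 (γ E))) :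
    Measurable γ := by
  have hc : ∀ n : ℕ, Continuous fun p : ℝ × (ℤ → ℝ) =>
      Anderson.matNorm (Anderson.Tmat p.1 p.2 0 (n : ℤ)) := by
    intro n
    have hT : Continuous fun p : ℝ × (ℤ → ℝ) => Anderson.Tmat p.1 p.2 0 (n : ℤ) := by
      unfold Anderson.Tmat
      apply continuous_list_prod
      intro i _
      apply continuous_matrix
      intro x y
      fin_cases x <;> fin_cases y <;>
        simp [Anderson.Amat] <;>
        first
          | exact continuous_const
          | exact continuous_fst.sub ((continuous_apply _).comp continuous_snd)
    unfold Anderson.matNorm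
    exact Real.continuous_sqrt.comp (continuous_finset_sum _ fun i _ =>
      continuous_finset_sum _ fun j _ => (hT.matrix_elem i j).pow 2)
  have hm : ∀ n : ℕ, Measurable fun E : ℝ =>
      (∫ ω, Real.log (matNorm (Tmat E ω 0 (n : ℤ))) ∂ℙ) / ((n : ℝ) + 1) := by
    intro n
    have hsm : StronglyMeasurable fun p : ℝ × (ℤ → ℝ) =>
        Real.log (Anderson.matNorm (Anderson.Tmat p.1 p.2 0 (n : ℤ))) :=
      (Real.measurable_log.comp (hc n).measurable).stronglyMeasurable
    exact hsm.integral_prod_right'.measurable.div_const _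
  exact measurable_of_tendsto_metrizable hm (tendsto_pi_nhds.mpr hγ)

end AndersonAux2

open Anderson in
/-- Lemma 3.2: a.s. smallness of the Lebesgue measure of the lower large-deviation
sets in the energy variable. -/
theorem small_measure_of_lower_deviation_sets
    (μ : Measure ℝ) [IsProbabilityMeasure μ]
    (S : Set ℝ)
    (hS_supp : ∀ x : ℝ, x ∈ S ↔ ∀ U ∈ nhds x, 0 < μ U)
    (hS_cpt : IsCompact S) (hS_two : S.Nontrivial)
    (ℙ : Measure (ℤ → ℝ)) [IsProbabilityMeasure ℙ]
    (hiid : ∀ I : Finset ℤ, ℙ.map (fun ω (i : I) => ω (i : ℤ)) = Measure.pi fun _ : I => μ)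
    (γ : ℝ → ℝ)
    (hγ : ∀ E : ℝ, Tendsto
      (fun n : ℕ => (∫ ω, Real.log (matNorm (Tmat E ω 0 n)) ∂ℙ) / (n + 1)) atTop (𝓝 (γ E)))
    (ε₀ η₀ : ℝ) (N₀ : ℕ) (hε₀ : 0 < ε₀) (hη₀ : 0 < η₀)
    (hLDT : ∀ a b : ℤ, (N₀ : ℤ) < b - a → ∀ E ∈ Set.Icc (-2 : ℝ) 2 + S,
      ℙ {ω | ε₀ ≤ |Real.log |Pdet E ω a b| / ((b : ℝ) - (a : ℝ) + 1) - γ E|}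
        ≤ ENNReal.ofReal (Real.exp (-η₀ * ((b : ℝ) - (a : ℝ) + 1))))
    (δ₀ : ℝ) (hδ₀ : 0 < δ₀) (hδ₀η : δ₀ < η₀) :
    ∀ᵐ ω ∂ℙ, ∃ N₁ : ℕ, ∀ n : ℕ, n > N₁ →
      volume ({E : ℝ | |Pdet E ω ((n : ℤ) + 1) (3 * n + 1)|
            ≤ Real.exp ((γ E - ε₀) * (2 * n + 1))} ∩ (Set.Icc (-2 : ℝ) 2 + S))
        ≤ ENNReal.ofReal (Real.exp (-(η₀ - δ₀) * (2 * n + 1))) ∧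
      volume ({E : ℝ | |Pdet E ω (-(n : ℤ)) n|
            ≤ Real.exp ((γ E - ε₀) * (2 * n + 1))} ∩ (Set.Icc (-2 : ℝ) 2 + S))
        ≤ ENNReal.ofReal (Real.exp (-(η₀ - δ₀) * (2 * n + 1))) := by
  classical
  set σ' : Set ℝ := Set.Icc (-2 : ℝ) 2 + S with hσ'def
  have hσcpt : IsCompact σ' := isCompact_Icc.add hS_cpt
  have hσm : MeasurableSet σ' := hσcpt.isClosed.measurableSet
  have hσfin : volume σ' ≠ ⊤ := hσcpt.measure_lt_top.ne
  have hγm : Measurable γ := AndersonAux2.measurable_gamma ℙ hγ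
  -- Key per-box estimate
  have key : ∀ a b : ℤ, (N₀ : ℤ) < b - a → ∀ L : ℝ, (b : ℝ) - (a : ℝ) + 1 = L →
      ℙ {ω : ℤ → ℝ | ENNReal.ofReal (Real.exp (-(η₀ - δ₀) * L)) <
          volume ({E : ℝ | |Pdet E ω a b| ≤ Real.exp ((γ E - ε₀) * L)} ∩ σ')}
        ≤ volume σ' * ENNReal.ofReal (Real.exp (-δ₀ * L)) := by
    intro a b hab' L hL
    have hab : a ≤ b := by omega
    have hL0 : 0 < L := by
      have : (a : ℝ) ≤ b := Int.cast_le.mpr hab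
      linarith [hL]
    set D : Set (ℝ × (ℤ → ℝ)) :=
      {p | |Pdet p.1 p.2 a b| ≤ Real.exp ((γ p.1 - ε₀) * L)} with hDdef
    have hDm : MeasurableSet D := by
      apply measurableSet_le
      · exact (AndersonAux2.measurable_Pdet a b).abs
      · exact (((hγm.comp measurable_fst).sub measurable_const).mul_const L).exp
    set Z : Set (ℝ × (ℤ → ℝ)) := {p | Pdet p.1 p.2 a b = 0} with hZdef
    have hZm : MeasurableSet Z := by
      have : Z = (fun p : ℝ × (ℤ → ℝ) => Pdet p.1 p.2 a b) ⁻¹' {0} := by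
        ext p; simp [hZdef]
      rw [this]
      exact (AndersonAux2.measurable_Pdet a b) (measurableSet_singleton 0)
    have hZ0 : ((volume.restrict σ').prod ℙ) Z = 0 := by
      rw [Measure.prod_apply_symm hZm]
      have hz : ∀ ω : ℤ → ℝ, (volume.restrict σ') ((fun E : ℝ => (E, ω)) ⁻¹' Z) = 0 := by
        intro ω
        rw [Measure.restrict_apply' hσm]
        refine measure_mono_null ?_
          ((AndersonAux2.finite_root_set ω a b).measure_zero volume)
        exact fun E hE => hE.1
      simp [hz]
    have hprod : ((volume.restrict σ').prod ℙ) D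
        ≤ volume σ' * ENNReal.ofReal (Real.exp (-η₀ * L)) := by
      have hsplit : D ⊆ (D \ Z) ∪ Z := by
        intro p hp; by_cases h : p ∈ Z
        · exact Or.inr h
        · exact Or.inl ⟨hp, h⟩
      have hb : ∀ E ∈ σ', ℙ (Prod.mk E ⁻¹' (D \ Z)) ≤ ENNReal.ofReal (Real.exp (-η₀ * L)) := by
        intro E hE
        have hLDT' := hLDT a b hab' E hE
        rw [hL] at hLDT'
        refine le_trans (measure_mono ?_) hLDT'
        rintro ω ⟨hωD, hωZ⟩
        have hP0 : Pdet E ω a b ≠ 0 := hωZ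
        have habs : 0 < |Pdet E ω a b| := abs_pos.mpr hP0
        have hlog : Real.log |Pdet E ω a b| ≤ (γ E - ε₀) * L :=
          (Real.log_le_iff_le_exp habs).mpr hωD
        have hdiv : Real.log |Pdet E ω a b| / L ≤ γ E - ε₀ := (div_le_iff₀ hL0).mpr hlog
        show ε₀ ≤ |Real.log |Pdet E ω a b| / L - γ E|
        calc ε₀ ≤ -(Real.log |Pdet E ω a b| / L - γ E) := by linarith
          _ ≤ |Real.log |Pdet E ω a b| / L - γ E| := neg_le_abs _
      calc ((volume.restrict σ').prod ℙ) D
          ≤ ((volume.restrict σ').prod ℙ) (D \ Z) + ((volume.restrict σ').prod ℙ) Z :=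
            le_trans (measure_mono hsplit) (measure_union_le _ _)
        _ = ((volume.restrict σ').prod ℙ) (D \ Z) := by rw [hZ0, add_zero]
        _ = ∫⁻ E in σ', ℙ (Prod.mk E ⁻¹' (D \ Z)) ∂volume := Measure.prod_apply (hDm.diff hZm)
        _ ≤ ∫⁻ _ in σ', ENNReal.ofReal (Real.exp (-η₀ * L)) ∂volume :=
            setLIntegral_mono' hσm hb
        _ = ENNReal.ofReal (Real.exp (-η₀ * L)) * volume σ' := setLIntegral_const _ _
        _ = volume σ' * ENNReal.ofReal (Real.exp (-η₀ * L)) := mul_comm _ _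
    set r : ENNReal := ENNReal.ofReal (Real.exp (-(η₀ - δ₀) * L)) with hrdef
    have hr0 : r ≠ 0 := by
      simp [hrdef, ENNReal.ofReal_eq_zero, not_le, Real.exp_pos]
    have hrtop : r ≠ ⊤ := ENNReal.ofReal_ne_top
    set f : (ℤ → ℝ) → ENNReal := fun ω => (volume.restrict σ') ((fun E : ℝ => (E, ω)) ⁻¹' D)
      with hfdef
    have hfm : Measurable f := measurable_measure_prodMk_right hDm
    have hfeq : ∀ ω, f ω
        = volume ({E : ℝ | |Pdet E ω a b| ≤ Real.exp ((γ E - ε₀) * L)} ∩ σ') := by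
      intro ω
      show (volume.restrict σ') ((fun E : ℝ => (E, ω)) ⁻¹' D) = _
      rw [Measure.restrict_apply' hσm]
      rfl
    have hmarkov : r * ℙ {ω | r ≤ f ω} ≤ ((volume.restrict σ').prod ℙ) D := by
      rw [Measure.prod_apply_symm hDm]
      exact mul_meas_ge_le_lintegral hfm r
    have hmul : ENNReal.ofReal (Real.exp (-η₀ * L))
        = r * ENNReal.ofReal (Real.exp (-δ₀ * L)) := by
      rw [hrdef, ← ENNReal.ofReal_mul (Real.exp_pos _).le, ← Real.exp_add]
      congr 1
      ring_nf
    have hle : ℙ {ω | r ≤ f ω} ≤ volume σ' * ENNReal.ofReal (Real.exp (-δ₀ * L)) := by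
      have h2 : r * ℙ {ω | r ≤ f ω}
          ≤ r * (volume σ' * ENNReal.ofReal (Real.exp (-δ₀ * L))) := by
        refine hmarkov.trans (hprod.trans ?_)
        rw [hmul]; ring_nf; exact le_refl _
      exact (ENNReal.mul_le_mul_iff_right hr0 hrtop).mp h2
    refine le_trans (measure_mono ?_) hle
    intro ω hω
    simp only [Set.mem_setOf_eq] at hω ⊢
    rw [hfeq ω]
    exact hω.le
  -- Bad events and Borel-Cantelli
  set rr : ℕ → ENNReal := fun n => ENNReal.ofReal (Real.exp (-(η₀ - δ₀) * (2 * (n : ℝ) + 1)))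
    with hrrdef
  set Bad : ℕ → Set (ℤ → ℝ) := fun n =>
    {ω | rr n < volume ({E : ℝ | |Pdet E ω ((n : ℤ) + 1) (3 * (n : ℤ) + 1)|
        ≤ Real.exp ((γ E - ε₀) * (2 * (n : ℝ) + 1))} ∩ σ')} ∪
    {ω | rr n < volume ({E : ℝ | |Pdet E ω (-(n : ℤ)) (n : ℤ)|
        ≤ Real.exp ((γ E - ε₀) * (2 * (n : ℝ) + 1))} ∩ σ')} with hBadDef
  have hBad : ∀ n : ℕ, (N₀ : ℤ) < 2 * (n : ℤ) →
      ℙ (Bad n) ≤ 2 * (volume σ' * ENNReal.ofReal (Real.exp (-δ₀ * (2 * (n : ℝ) + 1)))) := by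
    intro n hn
    have h1 := key ((n : ℤ) + 1) (3 * (n : ℤ) + 1) (by omega) (2 * (n : ℝ) + 1)
      (by push_cast; ring)
    have h2 := key (-(n : ℤ)) (n : ℤ) (by omega) (2 * (n : ℝ) + 1) (by push_cast; ring)
    calc ℙ (Bad n) ≤ _ + _ := measure_union_le _ _
      _ ≤ volume σ' * ENNReal.ofReal (Real.exp (-δ₀ * (2 * (n : ℝ) + 1)))
          + volume σ' * ENNReal.ofReal (Real.exp (-δ₀ * (2 * (n : ℝ) + 1))) := add_le_add h1 h2
      _ = 2 * (volume σ' * ENNReal.ofReal (Real.exp (-δ₀ * (2 * (n : ℝ) + 1)))) :=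
          (two_mul _).symm
  set Bad' : ℕ → Set (ℤ → ℝ) := fun k => Bad (k + N₀ + 1) with hBad'Def
  have hsum : (∑' k, ℙ (Bad' k)) ≠ ⊤ := by
    set q : ENNReal := ENNReal.ofReal (Real.exp (-δ₀)) with hqdef
    have hq1 : q < 1 := by
      rw [hqdef, ENNReal.ofReal_lt_one]
      exact Real.exp_lt_one_iff.mpr (by linarith)
    have hterm : ∀ k : ℕ, ℙ (Bad' k) ≤ (2 * volume σ') * q ^ k := by
      intro k
      have hb := hBad (k + N₀ + 1) (by push_cast; omega)
      refine hb.trans ?_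
      rw [mul_assoc]
      refine mul_le_mul_right ?_ _
      refine mul_le_mul_right ?_ _
      rw [hqdef, ← ENNReal.ofReal_pow (Real.exp_pos _).le]
      apply ENNReal.ofReal_le_ofReal
      rw [← Real.exp_nat_mul]
      apply Real.exp_le_exp.mpr
      push_cast
      nlinarith [hδ₀.le, Nat.cast_nonneg (α := ℝ) N₀, Nat.cast_nonneg (α := ℝ) k]
    refine ne_top_of_le_ne_top ?_ (ENNReal.tsum_le_tsum hterm)
    rw [ENNReal.tsum_mul_left, ENNReal.tsum_geometric]
    refine ENNReal.mul_ne_top (ENNReal.mul_ne_top (by simp) hσfin)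
      (ENNReal.inv_ne_top.mpr ?_)
    intro h
    exact absurd (tsub_eq_zero_iff_le.mp h) (not_le.mpr hq1)
  have hae := MeasureTheory.ae_eventually_notMem hsum
  filter_upwards [hae] with ω hω
  rw [Filter.eventually_atTop] at hω
  obtain ⟨M, hM⟩ := hω
  refine ⟨M + N₀ + 1, ?_⟩
  intro n hn
  obtain ⟨k, hk, rfl⟩ : ∃ k, M ≤ k ∧ n = k + N₀ + 1 := ⟨n - N₀ - 1, by omega, by omega⟩
  have hnot := hM k hk
  simp only [hBad'Def, hBadDef, Set.mem_union, Set.mem_setOf_eq, not_or, not_lt] at hnot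
  obtain ⟨h1, h2⟩ := hnot
  constructor
  · exact h1
  · exact h2
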